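/- For every μ > 0, the smoothed norm g_μ : ℝ^p → ℝ defined by g_μ(z) := sup{⟨α, z⟩ − (μ/2)‖α‖₂² : ‖α‖₂ ≤ 1} is differentiable at every z ∈ ℝ^p, and its gradient at z equals P₂(z/μ), where P₂(v) := v if ‖v‖₂ ≤ 1 and P₂(v) := v/‖v‖₂ otherwise. -/

import Mathlib

open scoped InnerProductSpace

/-- The smoothed norm `g_μ(z) = sup { ⟪α, z⟫ - (μ/2)‖α‖₂² : ‖α‖₂ ≤ 1 }`. -/
noncomputable def gsm {p : ℕ} (μ : ℝ) (z : EuclideanSpace ℝ (Fin p)) : ℝ :=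
  sSup ((fun α : EuclideanSpace ℝ (Fin p) => ⟪α, z⟫_ℝ - μ / 2 * ‖α‖ ^ 2) ''
    {α : EuclideanSpace ℝ (Fin p) | ‖α‖ ≤ 1})

/-- Projection onto the closed Euclidean unit ball. -/
noncomputable def proj2 {p : ℕ} (v : EuclideanSpace ℝ (Fin p)) : EuclideanSpace ℝ (Fin p) :=
  if ‖v‖ ≤ 1 then v else ‖v‖⁻¹ • v

lemma proj2_eq {p : ℕ} (v : EuclideanSpace ℝ (Fin p)) :
    proj2 v = (max ‖v‖ 1)⁻¹ • v := by
  unfold proj2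
  by_cases h : ‖v‖ ≤ 1
  · rw [if_pos h, max_eq_right h, inv_one, one_smul]
  · rw [if_neg h, max_eq_left (le_of_lt (not_le.mp h))]

lemma norm_proj2_le {p : ℕ} (v : EuclideanSpace ℝ (Fin p)) : ‖proj2 v‖ ≤ 1 := by
  unfold proj2
  by_cases h : ‖v‖ ≤ 1
  · rwa [if_pos h]
  · push_neg at h
    rw [if_neg (not_le.mpr h), norm_smul, norm_inv, norm_norm,
      inv_mul_cancel₀ (by positivity)]

lemma continuous_proj2 {p : ℕ} : Continuous (proj2 (p := p)) := by
  have : proj2 (p := p) = fun v => (max ‖v‖ 1)⁻¹ • v := funext proj2_eq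
  rw [this]
  exact ((continuous_norm.max continuous_const).inv₀
    (fun v => ne_of_gt (lt_of_lt_of_le one_pos (le_max_right _ _)))).smul continuous_id

lemma proj2_dist_min {p : ℕ} (v α : EuclideanSpace ℝ (Fin p)) (hα : ‖α‖ ≤ 1) :
    ‖proj2 v - v‖ ≤ ‖α - v‖ := by
  unfold proj2
  by_cases h : ‖v‖ ≤ 1
  · rw [if_pos h, sub_self, norm_zero]; positivity
  · push_neg at h
    rw [if_neg (not_le.mpr h)]
    have h0 : ‖v‖ ≠ 0 := by positivity
    have : ‖v‖⁻¹ • v - v = (‖v‖⁻¹ - 1) • v := by rw [sub_smul, one_smul]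
    rw [this, norm_smul, Real.norm_eq_abs, abs_of_nonpos (by
      simp only [sub_nonpos]; exact inv_le_one_of_one_le₀ h.le)]
    have h1 : -(‖v‖⁻¹ - 1) * ‖v‖ = ‖v‖ - 1 := by
      field_simp
      ring
    rw [h1]
    calc ‖v‖ - 1 ≤ ‖v‖ - ‖α‖ := by linarith
    _ ≤ ‖v - α‖ := norm_sub_norm_le _ _
    _ = ‖α - v‖ := norm_sub_rev _ _

lemma fval {p : ℕ} (μ : ℝ) (hμ : 0 < μ) (z α : EuclideanSpace ℝ (Fin p)) :
    ⟪α, z⟫_ℝ - μ / 2 * ‖α‖ ^ 2 =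
      μ / 2 * ‖μ⁻¹ • z‖ ^ 2 - μ / 2 * ‖α - μ⁻¹ • z‖ ^ 2 := by
  set v := μ⁻¹ • z with hv
  have hz : z = μ • v := by
    rw [hv, smul_smul, mul_inv_cancel₀ hμ.ne', one_smul]
  rw [hz, real_inner_smul_right, @norm_sub_sq_real]
  ring

lemma gsm_isGreatest {p : ℕ} (μ : ℝ) (hμ : 0 < μ) (z : EuclideanSpace ℝ (Fin p)) :
    IsGreatest ((fun α : EuclideanSpace ℝ (Fin p) => ⟪α, z⟫_ℝ - μ / 2 * ‖α‖ ^ 2) ''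
      {α : EuclideanSpace ℝ (Fin p) | ‖α‖ ≤ 1})
      (⟪proj2 (μ⁻¹ • z), z⟫_ℝ - μ / 2 * ‖proj2 (μ⁻¹ • z)‖ ^ 2) := by
  constructor
  · exact ⟨proj2 (μ⁻¹ • z), norm_proj2_le _, rfl⟩
  · rintro y ⟨α, hα, rfl⟩
    show ⟪α, z⟫_ℝ - μ / 2 * ‖α‖ ^ 2 ≤ _
    rw [fval μ hμ z α, fval μ hμ z (proj2 (μ⁻¹ • z))]
    have h := proj2_dist_min (μ⁻¹ • z) α hα
    have h2 : ‖proj2 (μ⁻¹ • z) - μ⁻¹ • z‖ ^ 2 ≤ ‖α - μ⁻¹ • z‖ ^ 2 :=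
      pow_le_pow_left₀ (norm_nonneg _) h 2
    nlinarith

lemma gsm_eq {p : ℕ} (μ : ℝ) (hμ : 0 < μ) (z : EuclideanSpace ℝ (Fin p)) :
    gsm μ z = ⟪proj2 (μ⁻¹ • z), z⟫_ℝ - μ / 2 * ‖proj2 (μ⁻¹ • z)‖ ^ 2 := by
  unfold gsm
  exact (gsm_isGreatest μ hμ z).csSup_eq

lemma gsm_ge {p : ℕ} (μ : ℝ) (hμ : 0 < μ) (z β : EuclideanSpace ℝ (Fin p))
    (hβ : ‖β‖ ≤ 1) : ⟪β, z⟫_ℝ - μ / 2 * ‖β‖ ^ 2 ≤ gsm μ z := by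
  unfold gsm
  exact le_csSup (gsm_isGreatest μ hμ z).bddAbove ⟨β, hβ, rfl⟩

/-- For every `μ > 0`, `g_μ` is differentiable everywhere with gradient `P₂(z/μ)` at `z`. -/
theorem stmt4 {p : ℕ} (μ : ℝ) (hμ : 0 < μ) :
    ∀ z : EuclideanSpace ℝ (Fin p), HasGradientAt (gsm μ) (proj2 (μ⁻¹ • z)) z := by
  intro z
  rw [hasGradientAt_iff_isLittleO]
  rw [Asymptotics.isLittleO_iff]
  intro c hc
  have hcont : ContinuousAt (fun w : EuclideanSpace ℝ (Fin p) => proj2 (μ⁻¹ • w)) z :=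
    (continuous_proj2.comp (continuous_const_smul μ⁻¹)).continuousAt
  have hev : ∀ᶠ w in nhds z, dist (proj2 (μ⁻¹ • w)) (proj2 (μ⁻¹ • z)) < c :=
    Metric.tendsto_nhds.mp hcont c hc
  filter_upwards [hev] with w hw
  set Pz := proj2 (μ⁻¹ • z) with hPz
  set Pw := proj2 (μ⁻¹ • w) with hPw
  have hlow : gsm μ z + ⟪Pz, w - z⟫_ℝ ≤ gsm μ w := by
    have := gsm_ge μ hμ w Pz (norm_proj2_le _)
    rw [gsm_eq μ hμ z]
    rw [inner_sub_right]
    linarith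
  have hup : gsm μ w ≤ gsm μ z + ⟪Pw, w - z⟫_ℝ := by
    have := gsm_ge μ hμ z Pw (norm_proj2_le _)
    rw [gsm_eq μ hμ w]
    rw [inner_sub_right]
    linarith
  have hkey : gsm μ w - gsm μ z - ⟪Pz, w - z⟫_ℝ ≤ ⟪Pw - Pz, w - z⟫_ℝ := by
    rw [inner_sub_left]; linarith
  have hb : ⟪Pw - Pz, w - z⟫_ℝ ≤ ‖Pw - Pz‖ * ‖w - z‖ := real_inner_le_norm _ _
  have hnn : 0 ≤ gsm μ w - gsm μ z - ⟪Pz, w - z⟫_ℝ := by linarith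
  rw [Real.norm_eq_abs, abs_of_nonneg hnn, norm_sub_rev]
  have hPdist : ‖Pw - Pz‖ ≤ c := by
    rw [← dist_eq_norm]; exact hw.le
  calc gsm μ w - gsm μ z - ⟪Pz, w - z⟫_ℝ ≤ ‖Pw - Pz‖ * ‖w - z‖ := le_trans hkey hb
  _ ≤ c * ‖w - z‖ := by
      apply mul_le_mul_of_nonneg_right hPdist (norm_nonneg _)
  _ = c * ‖z - w‖ := by rw [norm_sub_rev]
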